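/- arXiv:2106.06142 — 5 statements merged into one kernel-verified Lean document; each statement's English description precedes it below -/
import Mathlib

section
/- For a nonnegative bounded measurable loss ℓ and probability distribution P, CVaR_α(P) := inf over η ∈ ℝ of { α^{-1} E_P[(ℓ(Z) - η)_+] + η } is attained, and the infimum is achieved at the α-quantile q(α) = inf{ q : P(ℓ(Z) > q) ≤ α }. -/
open MeasureTheory
open scoped ENNReal

/-- For a nonnegative bounded measurable loss `ℓ`, the CVaR dual infimum
`inf_η { α⁻¹ E_P[(ℓ - η)_+] + η }` is attained at the α-quantile
`q(α) = inf { q | P(ℓ > q) ≤ α }`. -/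
theorem cvar_attained_at_quantile {Z : Type*} [MeasurableSpace Z]
    (P : Measure Z) [IsProbabilityMeasure P]
    (ℓ : Z → ℝ) (hmeas : Measurable ℓ) (hnonneg : ∀ z, 0 ≤ ℓ z)
    (C : ℝ) (hbdd : ∀ z, ℓ z ≤ C)
    (α : ℝ) (hα : 0 < α) (hα1 : α < 1)
    (q : ℝ) (hq : q = sInf {r : ℝ | P {z | ℓ z > r} ≤ ENNReal.ofReal α}) :
    α⁻¹ * (∫ z, max (ℓ z - q) 0 ∂P) + q =
      ⨅ η : ℝ, α⁻¹ * (∫ z, max (ℓ z - η) 0 ∂P) + η := by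
  have hα0 : (0:ℝ) ≤ α := hα.le
  set S : Set ℝ := {r : ℝ | P {z | ℓ z > r} ≤ ENNReal.ofReal α} with hS
  -- S nonempty
  have hSC : C ∈ S := by
    have hempty : {z | ℓ z > C} = ∅ := by
      ext z; simp [not_lt.mpr (hbdd z)]
    simp [hS, hempty]
  have hSne : S.Nonempty := ⟨C, hSC⟩
  have hSbdd : BddBelow S := by
    refine ⟨0, fun r hr => ?_⟩
    by_contra hr0
    push_neg at hr0
    have huniv : {z | ℓ z > r} = Set.univ := by
      ext z; simp only [Set.mem_setOf_eq, Set.mem_univ, iff_true]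
      exact lt_of_lt_of_le hr0 (hnonneg z)
    have h1le : (1:ℝ≥0∞) ≤ ENNReal.ofReal α := by
      have := hr; rw [hS] at this
      simpa [huniv] using this
    have : (1:ℝ) ≤ α := ENNReal.one_le_ofReal.mp h1le
    linarith
  have hmonoS : ∀ {a b : ℝ}, a ≤ b → {z | ℓ z > b} ⊆ {z | ℓ z > a} :=
    fun hab z hz => lt_of_le_of_lt hab hz
  have hupper : ∀ r, q < r → P {z | ℓ z > r} ≤ ENNReal.ofReal α := by
    intro r hr
    rw [hq] at hr
    obtain ⟨s, hsS, hsr⟩ := (csInf_lt_iff hSbdd hSne).mp hr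
    exact le_trans (measure_mono (hmonoS hsr.le)) hsS
  have hlower : ∀ r, r < q → ENNReal.ofReal α < P {z | ℓ z > r} := by
    intro r hr
    by_contra h
    push_neg at h
    have : q ≤ r := hq ▸ csInf_le hSbdd h
    linarith
  -- h1 : P(ℓ > q) ≤ α
  have h1 : P {z | ℓ z > q} ≤ ENNReal.ofReal α := by
    have hU : {z | ℓ z > q} = ⋃ n : ℕ, {z | ℓ z > q + 1/(n+1)} := by
      ext z
      simp only [Set.mem_setOf_eq, Set.mem_iUnion]
      constructor
      · intro h
        obtain ⟨n, hn⟩ := exists_nat_one_div_lt (sub_pos.mpr h)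
        refine ⟨n, ?_⟩
        have : (1:ℝ)/(n+1) < ℓ z - q := by exact_mod_cast hn
        linarith
      · rintro ⟨n, hn⟩
        have hpos : (0:ℝ) < 1/((n:ℝ)+1) := by positivity
        linarith
    have hdir : Directed (· ⊆ ·) (fun n : ℕ => {z | ℓ z > q + 1/((n:ℝ)+1)}) := by
      apply Monotone.directed_le
      intro n m hnm
      apply hmonoS
      have : (1:ℝ)/((m:ℝ)+1) ≤ 1/((n:ℝ)+1) := by
        apply one_div_le_one_div_of_le (by positivity)
        exact_mod_cast add_le_add_left (Nat.cast_le.mpr hnm) 1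
      linarith
    rw [hU, Directed.measure_iUnion hdir]
    exact iSup_le fun n => hupper _ (by
      have hpos : (0:ℝ) < 1/((n:ℝ)+1) := by positivity
      linarith)
  -- h2 : α ≤ P(ℓ ≥ q)
  have h2 : ENNReal.ofReal α ≤ P {z | ℓ z ≥ q} := by
    have hI : {z | ℓ z ≥ q} = ⋂ n : ℕ, {z | ℓ z > q - 1/((n:ℝ)+1)} := by
      ext z
      simp only [Set.mem_setOf_eq, Set.mem_iInter]
      constructor
      · intro h n
        have hpos : (0:ℝ) < 1/((n:ℝ)+1) := by positivity
        linarith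
      · intro h
        by_contra hcon
        push_neg at hcon
        obtain ⟨n, hn⟩ := exists_nat_one_div_lt (sub_pos.mpr hcon)
        have hn' : (1:ℝ)/((n:ℝ)+1) < q - ℓ z := by exact_mod_cast hn
        have := h n
        linarith
    have hdir : Directed (· ⊇ ·) (fun n : ℕ => {z | ℓ z > q - 1/((n:ℝ)+1)}) := by
      apply Antitone.directed_ge
      intro n m hnm
      apply hmonoS
      have : (1:ℝ)/((m:ℝ)+1) ≤ 1/((n:ℝ)+1) := by
        apply one_div_le_one_div_of_le (by positivity)
        exact_mod_cast add_le_add_left (Nat.cast_le.mpr hnm) 1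
      linarith
    rw [hI, Directed.measure_iInter
      (fun n => (measurableSet_lt measurable_const hmeas).nullMeasurableSet)
      hdir ⟨0, measure_ne_top P _⟩]
    refine le_iInf fun n => (hlower _ ?_).le
    have hpos : (0:ℝ) < 1/((n:ℝ)+1) := by positivity
    linarith
  -- measurability of level sets
  have hmq : MeasurableSet {z | ℓ z > q} := measurableSet_lt measurable_const hmeas
  have hmq' : MeasurableSet {z | ℓ z ≥ q} := measurableSet_le measurable_const hmeas
  -- integrability
  have hint : ∀ η : ℝ, Integrable (fun z => max (ℓ z - η) 0) P := by
    intro η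
    refine Integrable.mono' (integrable_const (|C| + |η|))
      ((hmeas.sub measurable_const).max measurable_const).aestronglyMeasurable ?_
    filter_upwards with z
    rw [Real.norm_eq_abs, abs_of_nonneg (le_max_right _ _)]
    have h1 := hbdd z
    have h2 := le_abs_self C
    have h3 := neg_abs_le η
    apply max_le <;> [linarith; positivity]
  have hp1 : (P {z | ℓ z > q}).toReal ≤ α := ENNReal.toReal_le_of_le_ofReal hα0 h1
  have hp2 : α ≤ (P {z | ℓ z ≥ q}).toReal :=
    (ENNReal.ofReal_le_iff_le_toReal (measure_ne_top P _)).mp h2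
  have hinv : (0:ℝ) < α⁻¹ := inv_pos.mpr hα
  have hone : α⁻¹ * α = 1 := inv_mul_cancel₀ hα.ne'
  -- key inequality
  have key : ∀ η : ℝ, α⁻¹ * (∫ z, max (ℓ z - q) 0 ∂P) + q ≤
      α⁻¹ * (∫ z, max (ℓ z - η) 0 ∂P) + η := by
    intro η
    rcases le_or_gt q η with hqη | hηq
    · have hpt : ∀ z, max (ℓ z - q) 0 ≤
          max (ℓ z - η) 0 + ({z | ℓ z > q}.indicator (fun _ => (η - q)) z) := by
        intro z
        by_cases hz : z ∈ {z | ℓ z > q}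
        · rw [Set.indicator_of_mem hz]
          have hz' : ℓ z > q := hz
          rcases le_or_gt (ℓ z) η with h | h
          · have : max (ℓ z - q) 0 = ℓ z - q := max_eq_left (by linarith)
            have h0 : (0:ℝ) ≤ max (ℓ z - η) 0 := le_max_right _ _
            linarith
          · have e1 : max (ℓ z - q) 0 = ℓ z - q := max_eq_left (by linarith)
            have e2 : max (ℓ z - η) 0 = ℓ z - η := max_eq_left (by linarith)
            linarith
        · rw [Set.indicator_of_notMem hz]
          have hz' : ¬ (ℓ z > q) := hz
          have : max (ℓ z - q) 0 = 0 := max_eq_right (by push_neg at hz'; linarith)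
          have h0 : (0:ℝ) ≤ max (ℓ z - η) 0 := le_max_right _ _
          linarith
      have hIntInd : Integrable ({z | ℓ z > q}.indicator (fun _ => (η - q))) P :=
        (integrable_const (η - q)).indicator hmq
      have hInt : (∫ z, max (ℓ z - q) 0 ∂P) ≤
          ∫ z, (max (ℓ z - η) 0 + {z | ℓ z > q}.indicator (fun _ => (η - q)) z) ∂P :=
        integral_mono (hint q) ((hint η).add hIntInd) hpt
      rw [integral_add (hint η) hIntInd, integral_indicator_const _ hmq] at hInt
      simp only [smul_eq_mul, measureReal_def] at hInt
      have hp0 : (0:ℝ) ≤ (P {z | ℓ z > q}).toReal := ENNReal.toReal_nonneg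
      nlinarith [mul_le_mul_of_nonneg_left hInt hinv.le,
        mul_le_mul_of_nonneg_right hp1 (mul_nonneg hinv.le (sub_nonneg.mpr hqη))]
    · have hpt : ∀ z, max (ℓ z - q) 0 + ({z | ℓ z ≥ q}.indicator (fun _ => (q - η)) z) ≤
          max (ℓ z - η) 0 := by
        intro z
        by_cases hz : z ∈ {z | ℓ z ≥ q}
        · rw [Set.indicator_of_mem hz]
          have hz' : ℓ z ≥ q := hz
          have e1 : max (ℓ z - η) 0 = ℓ z - η := max_eq_left (by linarith)
          rcases le_or_gt (ℓ z - q) 0 with h | h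
          · have : max (ℓ z - q) 0 = 0 := max_eq_right h
            linarith
          · have : max (ℓ z - q) 0 = ℓ z - q := max_eq_left h.le
            linarith
        · rw [Set.indicator_of_notMem hz]
          have hz' : ¬ (ℓ z ≥ q) := hz
          push_neg at hz'
          have : max (ℓ z - q) 0 = 0 := max_eq_right (by linarith)
          have h0 : (0:ℝ) ≤ max (ℓ z - η) 0 := le_max_right _ _
          linarith
      have hIntInd : Integrable ({z | ℓ z ≥ q}.indicator (fun _ => (q - η))) P :=
        (integrable_const (q - η)).indicator hmq'
      have hInt : (∫ z, (max (ℓ z - q) 0 + {z | ℓ z ≥ q}.indicator (fun _ => (q - η)) z) ∂P)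
          ≤ ∫ z, max (ℓ z - η) 0 ∂P :=
        integral_mono ((hint q).add hIntInd) (hint η) hpt
      rw [integral_add (hint q) hIntInd, integral_indicator_const _ hmq'] at hInt
      simp only [smul_eq_mul, measureReal_def] at hInt
      have hp0 : (0:ℝ) ≤ (P {z | ℓ z ≥ q}).toReal := ENNReal.toReal_nonneg
      nlinarith [mul_le_mul_of_nonneg_left hInt hinv.le,
        mul_le_mul_of_nonneg_right hp2 (mul_nonneg hinv.le (sub_nonneg.mpr hηq.le))]
  have hbddB : BddBelow (Set.range fun η : ℝ => α⁻¹ * (∫ z, max (ℓ z - η) 0 ∂P) + η) := by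
    refine ⟨α⁻¹ * (∫ z, max (ℓ z - q) 0 ∂P) + q, ?_⟩
    rintro x ⟨η, rfl⟩
    exact key η
  exact le_antisymm (le_ciInf key) (ciInf_le hbddB q)
end

section
/- Let ℓ be nonnegative with E_P[ℓ] = μ, Var_P[ℓ] = v, and suppose ρ ≤ v/(2μ²). Set η* = μ - √(v/(2ρ)). Then η* ≤ 0 and the dual objective evaluates to √(1+2ρ)·E_P[(ℓ-η*)_+²]^{1/2} + η* = μ + √(2ρ v). -/
open MeasureTheory Real

/-- If `ρ ≤ v/(2μ²)`, then `η* = μ - √(v/(2ρ)) ≤ 0` and the χ²-DRO dual objective at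
`η*` equals `μ + √(2ρv)`. -/
theorem chisq_dual_at_optimal_eta {Z : Type*} [MeasurableSpace Z]
    (P : Measure Z) [IsProbabilityMeasure P]
    (ℓ : Z → ℝ) (hmeas : Measurable ℓ) (hnonneg : ∀ z, 0 ≤ ℓ z)
    (hL2 : MemLp ℓ 2 P)
    (μ v : ℝ) (hμ : μ = ∫ z, ℓ z ∂P) (hv : v = ∫ z, (ℓ z - μ) ^ 2 ∂P)
    (ρ : ℝ) (hρ : 0 < ρ) (hρv : ρ ≤ v / (2 * μ ^ 2))
    (ηs : ℝ) (hηs : ηs = μ - Real.sqrt (v / (2 * ρ))) :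
    ηs ≤ 0 ∧
    Real.sqrt (1 + 2 * ρ) * Real.sqrt (∫ z, (max (ℓ z - ηs) 0) ^ 2 ∂P) + ηs =
      μ + Real.sqrt (2 * ρ * v) := by
  have hv0 : 0 ≤ v := by
    rw [hv]; exact integral_nonneg (fun z => sq_nonneg _)
  have hd : (0:ℝ) ≤ v / (2 * ρ) := by positivity
  set c := Real.sqrt (v / (2 * ρ)) with hcdef
  have hc0 : 0 ≤ c := Real.sqrt_nonneg _
  have hc2 : c ^ 2 = v / (2 * ρ) := Real.sq_sqrt hd
  have hμc : μ ≤ c := by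
    have hμ2 : μ ^ 2 ≤ v / (2 * ρ) := by
      rcases eq_or_ne μ 0 with h | h
      · simpa [h] using hd
      · have hpos : (0:ℝ) < 2 * μ ^ 2 := by positivity
        have h1 : ρ * (2 * μ ^ 2) ≤ v := (le_div_iff₀ hpos).mp hρv
        rw [le_div_iff₀ (by positivity)]
        nlinarith
    calc μ ≤ |μ| := le_abs_self μ
      _ = Real.sqrt (μ ^ 2) := (Real.sqrt_sq_eq_abs μ).symm
      _ ≤ c := Real.sqrt_le_sqrt hμ2
  have hηs0 : ηs ≤ 0 := by rw [hηs]; linarith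
  refine ⟨hηs0, ?_⟩
  -- remove the max
  have hmax : ∀ z, max (ℓ z - ηs) 0 = ℓ z - ηs := by
    intro z
    exact max_eq_left (by linarith [hnonneg z])
  simp_rw [hmax]
  -- integrability facts
  have hintℓ : Integrable ℓ P := hL2.integrable one_le_two
  have hL2' : MemLp (fun z => ℓ z - μ) 2 P := hL2.sub (memLp_const μ)
  have hint1 : Integrable (fun z => (ℓ z - μ) ^ 2) P := by
    simpa [pow_two] using hL2'.integrable_sq
  have hint2 : Integrable (fun z => ℓ z - μ) P := hintℓ.sub (integrable_const μ)
  have hJ : ∫ z, (ℓ z - μ) ∂P = 0 := by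
    rw [integral_sub hintℓ (integrable_const μ), integral_const]
    simp [hμ]
  have hI : ∫ z, (ℓ z - ηs) ^ 2 ∂P = v + v / (2 * ρ) := by
    have hrw : ∀ z, (ℓ z - ηs) ^ 2 = (ℓ z - μ) ^ 2 + (2 * c * (ℓ z - μ) + c ^ 2) := by
      intro z; rw [hηs]; ring
    simp_rw [hrw]
    have h2int : Integrable (fun z => 2 * c * (ℓ z - μ) + c ^ 2) P :=
      (hint2.const_mul (2 * c)).add (integrable_const _)
    have h3int : Integrable (fun z => 2 * c * (ℓ z - μ)) P := hint2.const_mul (2 * c)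
    rw [integral_add hint1 h2int, integral_add h3int (integrable_const _),
      MeasureTheory.integral_const_mul, hJ, integral_const]
    simp [hv, hc2]
  rw [hI]
  have hsum : v + v / (2 * ρ) = (1 + 2 * ρ) * (v / (2 * ρ)) := by
    field_simp; ring
  rw [hsum, Real.sqrt_mul (by positivity), ← hcdef, ← mul_assoc,
    Real.mul_self_sqrt (by positivity : (0:ℝ) ≤ 1 + 2 * ρ)]
  have h2ρv : Real.sqrt (2 * ρ * v) = 2 * ρ * c := by
    have h1 : 2 * ρ * c = Real.sqrt ((2 * ρ) ^ 2 * (v / (2 * ρ))) := by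
      rw [Real.sqrt_mul (by positivity : (0:ℝ) ≤ (2*ρ)^2), Real.sqrt_sq (by positivity), hcdef]
    rw [h1]
    congr 1
    field_simp
  rw [h2ρv, hηs]; ring
end

section
/- Let ℓ be nonnegative with E_P[ℓ]² ≥ Var_P[ℓ]/(2ρ), i.e. ρ ≥ Var_P[ℓ]/(2 E_P[ℓ]²). Then for every η < 0, the χ²-DRO dual objective satisfies g(η) ≥ g(0), where g(η) = √(1+2ρ)·E_P[(ℓ-η)²]^{1/2} + η. Hence the minimizer of g over ℝ is nonnegative. -/
open MeasureTheory Real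

/-- If `ρ ≥ Var_P[ℓ]/(2 E_P[ℓ]²)`, then for every `η < 0` the χ²-DRO dual objective
satisfies `g(η) ≥ g(0)`, where `g(η) = √(1+2ρ)·E_P[(ℓ-η)²]^{1/2} + η`. -/
theorem chisq_dual_nonneg_minimizer {Z : Type*} [MeasurableSpace Z]
    (P : Measure Z) [IsProbabilityMeasure P]
    (ℓ : Z → ℝ) (hmeas : Measurable ℓ) (hnonneg : ∀ z, 0 ≤ ℓ z)
    (hL2 : MemLp ℓ 2 P)
    (μ v : ℝ) (hμ : μ = ∫ z, ℓ z ∂P) (hv : v = ∫ z, (ℓ z - μ) ^ 2 ∂P)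
    (ρ : ℝ) (hρ : 0 < ρ) (hρv : v / (2 * ρ) ≤ μ ^ 2) :
    ∀ η : ℝ, η < 0 →
      Real.sqrt (1 + 2 * ρ) * Real.sqrt (∫ z, (ℓ z - 0) ^ 2 ∂P) + 0 ≤
        Real.sqrt (1 + 2 * ρ) * Real.sqrt (∫ z, (ℓ z - η) ^ 2 ∂P) + η := by
  intro η hη
  have hℓ1 : Integrable ℓ P := hL2.integrable one_le_two
  have hℓ2 : Integrable (fun z => ℓ z ^ 2) P := hL2.integrable_sq
  set S2 : ℝ := ∫ z, ℓ z ^ 2 ∂P with hS2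
  have hexp : ∀ c : ℝ, ∫ z, (ℓ z - c) ^ 2 ∂P = S2 - 2 * c * μ + c ^ 2 := by
    intro c
    have heq : ∀ z, (ℓ z - c) ^ 2 = ℓ z ^ 2 - (2 * c) * ℓ z + c ^ 2 := by
      intro z; ring
    simp_rw [heq]
    have h1 : Integrable (fun z => ℓ z ^ 2 - 2 * c * ℓ z) P :=
      hℓ2.sub (hℓ1.const_mul (2 * c))
    rw [integral_add h1 (integrable_const _),
        integral_sub hℓ2 (hℓ1.const_mul (2 * c)), MeasureTheory.integral_const_mul, integral_const]
    simp [← hμ, hS2]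
  have hS2nn : 0 ≤ S2 := integral_nonneg fun z => sq_nonneg _
  have hμnn : 0 ≤ μ := hμ ▸ integral_nonneg hnonneg
  have hvS2 : S2 = v + μ ^ 2 := by
    rw [hv, hexp μ]; ring
  set c : ℝ := 1 + 2 * ρ with hc
  have hc1 : (1 : ℝ) ≤ c := by simp [hc]; linarith
  have hvle : v ≤ 2 * ρ * μ ^ 2 := by
    have := (div_le_iff₀ (by linarith : (0:ℝ) < 2 * ρ)).mp hρv
    linarith [this]
  have hkey : S2 ≤ c * μ ^ 2 := by rw [hvS2, hc]; nlinarith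
  have hsq : Real.sqrt (c * S2) ≤ c * μ := by
    have h1 : c * S2 ≤ (c * μ) ^ 2 := by nlinarith
    calc Real.sqrt (c * S2) ≤ Real.sqrt ((c * μ) ^ 2) := Real.sqrt_le_sqrt h1
      _ = c * μ := Real.sqrt_sq (by positivity)
  rw [hexp 0, hexp η]
  have hcnn : (0:ℝ) ≤ c := by linarith
  rw [← Real.sqrt_mul hcnn, ← Real.sqrt_mul hcnn]
  have hsnn : 0 ≤ Real.sqrt (c * S2) := Real.sqrt_nonneg _
  have hgoal : Real.sqrt (c * S2) - η ≤ Real.sqrt (c * (S2 - 2 * η * μ + η ^ 2)) := by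
    rw [show Real.sqrt (c * (S2 - 2 * η * μ + η ^ 2)) =
        Real.sqrt (c * (S2 - 2 * η * μ + η ^ 2)) from rfl]
    have h2 : (Real.sqrt (c * S2) - η) ^ 2 ≤ c * (S2 - 2 * η * μ + η ^ 2) := by
      have hsqeq : Real.sqrt (c * S2) ^ 2 = c * S2 :=
        Real.sq_sqrt (by positivity)
      nlinarith [mul_le_mul_of_nonneg_left hsq (by linarith : (0:ℝ) ≤ -η)]
    exact Real.le_sqrt_of_sq_le h2
  have : S2 - 2 * 0 * μ + 0 ^ 2 = S2 := by ring
  rw [this]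
  linarith
end

section
/- Consider the two-point loss distribution where ℓ = 0 with probability 1-ε and ℓ = M with probability ε, with M > 0, ε ∈ (0,1), and ρ > 0 satisfying 1 + 2ρ ≤ 1/ε. Then the χ²-DRO risk inf_η { √(1+2ρ)·E[(ℓ-η)_+²]^{1/2} + η } = Mε + M√(2ρ ε(1-ε)), attained at η = εM - M√(ε(1-ε)/(2ρ)). -/
open MeasureTheory Real


lemma sq_bound_aux (b u v : ℝ) (hu : 0 ≤ u) (hv : 0 ≤ v) (hb : 0 ≤ b)
    (huv : u ^ 2 + v ^ 2 = 1) :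
    (u ^ 2 + b * (u * v)) ^ 2 ≤ (1 + b ^ 2) * u ^ 2 := by
  nlinarith [sq_nonneg (u * (v - b * u)), sq_nonneg u, sq_nonneg b, sq_nonneg (u*v)]


lemma chisq_aux_low (M ε ρ : ℝ) (hM : 0 < M) (hε : 0 < ε) (hε1 : ε < 1) (hρ : 0 < ρ)
    (hρε : 1 + 2 * ρ ≤ 1 / ε) (η : ℝ) :
    M * ε + M * Real.sqrt (2 * ρ * ε * (1 - ε)) ≤
      Real.sqrt (1 + 2 * ρ) *
        Real.sqrt ((1 - ε) * (max (-η) 0) ^ 2 + ε * (max (M - η) 0) ^ 2) + η := by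
  obtain ⟨a, ha_def⟩ : ∃ x, Real.sqrt (ε * (1 - ε)) = x := ⟨_, rfl⟩
  obtain ⟨b, hb_def⟩ : ∃ x, Real.sqrt (2 * ρ) = x := ⟨_, rfl⟩
  have ha2 : a ^ 2 = ε * (1 - ε) := by rw [← ha_def]; exact Real.sq_sqrt (by nlinarith)
  have hb2 : b ^ 2 = 2 * ρ := by rw [← hb_def]; exact Real.sq_sqrt (by nlinarith)
  have ha : 0 < a := ha_def ▸ Real.sqrt_pos.mpr (by nlinarith)
  have hb : 0 < b := hb_def ▸ Real.sqrt_pos.mpr (by nlinarith)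
  have hba : Real.sqrt (2 * ρ * ε * (1 - ε)) = b * a := by
    rw [← ha_def, ← hb_def, ← Real.sqrt_mul (by positivity)]; ring_nf
  have hεper : (1 + 2 * ρ) * ε ≤ 1 := by
    have := (le_div_iff₀ hε).mp hρε; linarith
  rw [hba]
  rcases le_or_gt η 0 with hη | hη
  · -- case η ≤ 0
    have h1 : max (-η) 0 = -η := max_eq_left (by linarith)
    have h2 : max (M - η) 0 = M - η := max_eq_left (by linarith)
    rw [h1, h2]
    have hXnn : (0:ℝ) ≤ (1 - ε) * (-η) ^ 2 + ε * (M - η) ^ 2 := by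
      have := sq_nonneg (-η); have := sq_nonneg (M - η); nlinarith
    have hrhs : 0 ≤ M * ε + M * (b * a) - η := by
      nlinarith [mul_pos hM (mul_pos hb ha)]
    have hmerge : Real.sqrt (1 + 2 * ρ) * Real.sqrt ((1 - ε) * (-η) ^ 2 + ε * (M - η) ^ 2)
        = Real.sqrt ((1 + 2 * ρ) * ((1 - ε) * (-η) ^ 2 + ε * (M - η) ^ 2)) :=
      (Real.sqrt_mul (by positivity) _).symm
    have hkey : M * ε + M * (b * a) - η ≤
        Real.sqrt ((1 + 2 * ρ) * ((1 - ε) * (-η) ^ 2 + ε * (M - η) ^ 2)) := by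
      rw [Real.le_sqrt hrhs (by positivity)]
      have hXeq : (1 + 2 * ρ) * ((1 - ε) * (-η) ^ 2 + ε * (M - η) ^ 2)
          = (1 + b ^ 2) * ((ε * M - η) ^ 2 + M ^ 2 * a ^ 2) := by
        rw [ha2, hb2]; ring
      rw [hXeq]
      nlinarith [sq_nonneg (M * a - b * (ε * M - η))]
    linarith [hmerge ▸ hkey]
  · rcases le_or_gt η M with hηM | hηM
    · -- case 0 ≤ η ≤ M
      have h1 : max (-η) 0 = 0 := max_eq_right (by linarith)
      have h2 : max (M - η) 0 = M - η := max_eq_left (by linarith)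
      rw [h1, h2]
      have hsq : (1 - ε) * (0:ℝ) ^ 2 + ε * (M - η) ^ 2 = (Real.sqrt ε * (M - η)) ^ 2 := by
        rw [mul_pow, Real.sq_sqrt hε.le]; ring
      rw [hsq, Real.sqrt_sq (mul_nonneg (Real.sqrt_nonneg ε) (by linarith))]
      have hce : Real.sqrt (1 + 2 * ρ) * Real.sqrt ε ≤ 1 := by
        rw [← Real.sqrt_mul (by positivity)]
        calc Real.sqrt ((1 + 2 * ρ) * ε) ≤ Real.sqrt 1 := Real.sqrt_le_sqrt hεper
          _ = 1 := Real.sqrt_one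
      have hstep : Real.sqrt (1 + 2 * ρ) * Real.sqrt ε * M ≤
          Real.sqrt (1 + 2 * ρ) * (Real.sqrt ε * (M - η)) + η := by
        nlinarith [mul_nonneg (sub_nonneg.mpr hce) hη.le]
      have hsplit : a = Real.sqrt ε * Real.sqrt (1 - ε) := by
        rw [← ha_def, Real.sqrt_mul hε.le]
      have key : ε + b * a ≤ Real.sqrt (1 + 2 * ρ) * Real.sqrt ε := by
        have h0 : 0 ≤ ε + b * a := by positivity
        have hmul : Real.sqrt (1 + 2 * ρ) * Real.sqrt ε = Real.sqrt ((1 + 2 * ρ) * ε) :=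
          (Real.sqrt_mul (by positivity) _).symm
        rw [hmul, Real.le_sqrt h0 (by positivity), hsplit, ← hb2]
        have hu2 : (Real.sqrt ε) ^ 2 = ε := Real.sq_sqrt hε.le
        have hv2 : (Real.sqrt (1 - ε)) ^ 2 = 1 - ε := Real.sq_sqrt (by linarith)
        have h := sq_bound_aux b (Real.sqrt ε) (Real.sqrt (1 - ε))
          (Real.sqrt_nonneg _) (Real.sqrt_nonneg _) hb.le (by rw [hu2, hv2]; ring)
        rw [hu2] at h
        exact h
      have hV : M * ε + M * (b * a) ≤ Real.sqrt (1 + 2 * ρ) * Real.sqrt ε * M := by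
        have h := mul_le_mul_of_nonneg_left key hM.le
        calc M * ε + M * (b * a) = M * (ε + b * a) := by ring
          _ ≤ M * (Real.sqrt (1 + 2 * ρ) * Real.sqrt ε) := h
          _ = Real.sqrt (1 + 2 * ρ) * Real.sqrt ε * M := by ring
      linarith
    · -- case η > M
      have h1 : max (-η) 0 = 0 := max_eq_right (by linarith)
      have h2 : max (M - η) 0 = 0 := max_eq_right (by linarith)
      rw [h1, h2]
      simp only [ne_eq, OfNat.ofNat_ne_zero, not_false_eq_true, zero_pow, mul_zero,
        add_zero, Real.sqrt_zero]
      have hba2 : b * a ≤ 1 - ε := by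
        have h : (b * a) ^ 2 ≤ (1 - ε) ^ 2 := by
          rw [mul_pow, ha2, hb2]; nlinarith
        nlinarith [mul_pos hb ha]
      nlinarith

lemma chisq_aux_eq (M ε ρ : ℝ) (hM : 0 < M) (hε : 0 < ε) (hε1 : ε < 1) (hρ : 0 < ρ)
    (hρε : 1 + 2 * ρ ≤ 1 / ε) :
    Real.sqrt (1 + 2 * ρ) *
        Real.sqrt ((1 - ε) * (max (-(ε * M - M * Real.sqrt (ε * (1 - ε) / (2 * ρ)))) 0) ^ 2 +
          ε * (max (M - (ε * M - M * Real.sqrt (ε * (1 - ε) / (2 * ρ)))) 0) ^ 2) +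
        (ε * M - M * Real.sqrt (ε * (1 - ε) / (2 * ρ))) =
      M * ε + M * Real.sqrt (2 * ρ * ε * (1 - ε)) := by
  obtain ⟨d, hd_def⟩ : ∃ x, Real.sqrt (ε * (1 - ε) / (2 * ρ)) = x := ⟨_, rfl⟩
  have hd0 : 0 ≤ d := hd_def ▸ Real.sqrt_nonneg _
  have hd2 : d ^ 2 = ε * (1 - ε) / (2 * ρ) := by
    rw [← hd_def]; exact Real.sq_sqrt (div_nonneg (by nlinarith) (by linarith))
  have hd2b : d ^ 2 * (2 * ρ) = ε * (1 - ε) := by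
    rw [hd2, div_mul_cancel₀ _ (by positivity : (2 * ρ) ≠ 0)]
  have hεper : (1 + 2 * ρ) * ε ≤ 1 := by
    have := (le_div_iff₀ hε).mp hρε; linarith
  have hsq : ε ^ 2 ≤ d ^ 2 := by nlinarith [hd2b, hεper, hρ, hε, hd0]
  have hεd : ε ≤ d := le_of_pow_le_pow_left₀ two_ne_zero hd0 hsq
  rw [hd_def]
  have hMd : M * ε ≤ M * d := mul_le_mul_of_nonneg_left hεd hM.le
  have hmax1 : max (-(ε * M - M * d)) 0 = -(ε * M - M * d) := max_eq_left (by linarith)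
  have hmax2 : max (M - (ε * M - M * d)) 0 = M - (ε * M - M * d) :=
    max_eq_left (by nlinarith [mul_nonneg hM.le hd0])
  rw [hmax1, hmax2]
  have hG : (1 - ε) * (-(ε * M - M * d)) ^ 2 + ε * (M - (ε * M - M * d)) ^ 2 =
      (M * d) ^ 2 * (1 + 2 * ρ) := by linear_combination (-(M ^ 2)) * hd2b
  rw [hG]
  have h1 : Real.sqrt ((M * d) ^ 2 * (1 + 2 * ρ)) = (M * d) * Real.sqrt (1 + 2 * ρ) := by
    rw [Real.sqrt_mul (sq_nonneg _), Real.sqrt_sq (by positivity)]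
  rw [h1]
  have h2 : Real.sqrt (1 + 2 * ρ) * ((M * d) * Real.sqrt (1 + 2 * ρ)) =
      (M * d) * (1 + 2 * ρ) := by
    rw [mul_comm, mul_assoc, Real.mul_self_sqrt (by positivity)]
  rw [h2]
  have h3 : Real.sqrt (2 * ρ * ε * (1 - ε)) = 2 * ρ * d := by
    rw [show 2 * ρ * ε * (1 - ε) = (2 * ρ * d) ^ 2 by linear_combination (-(2 * ρ)) * hd2b]
    exact Real.sqrt_sq (by positivity)
  rw [h3]; ring

/-- For the two-point loss (`ℓ = 0` w.p. `1-ε`, `ℓ = M` w.p. `ε`) with `M > 0`,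
`ε ∈ (0,1)` and `1 + 2ρ ≤ 1/ε`, the χ²-DRO risk equals `Mε + M√(2ρε(1-ε))`,
attained at `η = εM - M√(ε(1-ε)/(2ρ))`. -/
theorem chisq_dro_two_point {Z : Type*} [MeasurableSpace Z]
    (P : Measure Z) [IsProbabilityMeasure P]
    (ℓ : Z → ℝ) (hmeas : Measurable ℓ)
    (M ε : ℝ) (hM : 0 < M) (hε : 0 < ε) (hε1 : ε < 1)
    (h0 : P {z | ℓ z = 0} = ENNReal.ofReal (1 - ε))
    (hMset : P {z | ℓ z = M} = ENNReal.ofReal ε)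
    (ρ : ℝ) (hρ : 0 < ρ) (hρε : 1 + 2 * ρ ≤ 1 / ε) :
    (⨅ η : ℝ, Real.sqrt (1 + 2 * ρ) * Real.sqrt (∫ z, (max (ℓ z - η) 0) ^ 2 ∂P) + η) =
      M * ε + M * Real.sqrt (2 * ρ * ε * (1 - ε)) ∧
    Real.sqrt (1 + 2 * ρ) *
        Real.sqrt (∫ z,
          (max (ℓ z - (ε * M - M * Real.sqrt (ε * (1 - ε) / (2 * ρ)))) 0) ^ 2 ∂P) +
        (ε * M - M * Real.sqrt (ε * (1 - ε) / (2 * ρ))) =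
      M * ε + M * Real.sqrt (2 * ρ * ε * (1 - ε)) := by
  have hint : ∀ η : ℝ, ∫ z, (max (ℓ z - η) 0) ^ 2 ∂P =
      (1 - ε) * (max (-η) 0) ^ 2 + ε * (max (M - η) 0) ^ 2 := by
    intro η
    have hA : MeasurableSet {z | ℓ z = 0} := hmeas (measurableSet_singleton 0)
    have hB : MeasurableSet {z | ℓ z = M} := hmeas (measurableSet_singleton M)
    have hdisj : Disjoint {z | ℓ z = 0} {z | ℓ z = M} := by
      rw [Set.disjoint_left]
      intro z h1 h2
      exact hM.ne' (by simp only [Set.mem_setOf_eq] at h1 h2; rw [← h1, h2])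
    have hunion : P ({z | ℓ z = 0} ∪ {z | ℓ z = M}) = 1 := by
      rw [measure_union hdisj hB, h0, hMset, ← ENNReal.ofReal_add (by linarith) hε.le]
      norm_num
    have hae : ∀ᵐ z ∂P, ℓ z = 0 ∨ ℓ z = M := by
      rw [ae_iff]
      have hset : {z | ¬(ℓ z = 0 ∨ ℓ z = M)} = ({z | ℓ z = 0} ∪ {z | ℓ z = M})ᶜ := by
        ext z; simp [not_or]
      rw [hset, measure_compl (hA.union hB) (measure_ne_top _ _), hunion, measure_univ,
        tsub_self]
    have hcong : (fun z => (max (ℓ z - η) 0) ^ 2) =ᵐ[P]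
        (fun z => Set.indicator {z | ℓ z = 0}
          (fun _ => (max (-η) 0) ^ 2 - (max (M - η) 0) ^ 2) z + (max (M - η) 0) ^ 2) := by
      filter_upwards [hae] with z hz
      rcases hz with h | h
      · rw [Set.indicator_of_mem (show z ∈ {z | ℓ z = 0} from h), h]
        ring_nf
      · have hz0 : z ∉ {z | ℓ z = 0} := by
          simp only [Set.mem_setOf_eq, h]; exact hM.ne'
        rw [Set.indicator_of_notMem hz0, h]
        ring
    rw [integral_congr_ae hcong,
      integral_add ((integrable_const _).indicator hA) (integrable_const _),
      integral_indicator_const _ hA, integral_const, measureReal_def, measureReal_def, h0, measure_univ,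
      ENNReal.toReal_ofReal (by linarith : (0:ℝ) ≤ 1 - ε)]
    simp only [smul_eq_mul, ENNReal.toReal_one, one_mul]
    ring
  have hlow : ∀ η : ℝ, M * ε + M * Real.sqrt (2 * ρ * ε * (1 - ε)) ≤
      Real.sqrt (1 + 2 * ρ) * Real.sqrt (∫ z, (max (ℓ z - η) 0) ^ 2 ∂P) + η := by
    intro η
    rw [hint η]
    exact chisq_aux_low M ε ρ hM hε hε1 hρ hρε η
  have heq : Real.sqrt (1 + 2 * ρ) *
      Real.sqrt (∫ z,
        (max (ℓ z - (ε * M - M * Real.sqrt (ε * (1 - ε) / (2 * ρ)))) 0) ^ 2 ∂P) +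
      (ε * M - M * Real.sqrt (ε * (1 - ε) / (2 * ρ))) =
      M * ε + M * Real.sqrt (2 * ρ * ε * (1 - ε)) := by
    rw [hint _]
    exact chisq_aux_eq M ε ρ hM hε hε1 hρ hρε
  refine ⟨le_antisymm ?_ (le_ciInf hlow), heq⟩
  exact (ciInf_le ⟨_, by rintro x ⟨η, rfl⟩; exact hlow η⟩
    (ε * M - M * Real.sqrt (ε * (1 - ε) / (2 * ρ)))).trans_eq heq
end

section
/- Let ℓ be a continuous nonnegative loss, P_train a continuous (atomless) distribution, and ε ∈ (0,1). Define P* by the density P*(z) = P_train(z)/(1-ε) if ℓ(z) ≤ ℓ*, and 0 otherwise, where ℓ* satisfies P_train(ℓ(Z) > ℓ*) = ε. Then P* is a probability distribution, and for every threshold ℓ₀, P*(ℓ(Z) ≤ ℓ₀) = min{1, P_train(ℓ(Z) ≤ ℓ₀)/(1-ε)}; moreover this CDF pointwise dominates (is ≥) the CDF of ℓ under any P' admitting a decomposition P_train = (1-ε)P' + ε P̃'. -/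
open MeasureTheory Real

/-- For a continuous nonnegative loss and atomless `P_train`, the truncated distribution
`P* = (1-ε)⁻¹ P_train restricted to {ℓ ≤ ℓ*}` (with `P_train(ℓ > ℓ*) = ε`) is a
probability measure whose CDF of the loss equals `min{1, P_train(ℓ ≤ ℓ₀)/(1-ε)}`
and pointwise dominates the loss-CDF of any `P'` admitting a decomposition
`P_train = (1-ε)P' + εP̃'`. -/
theorem truncated_distribution_dominates {Z : Type*} [MeasurableSpace Z]
    [TopologicalSpace Z] [OpensMeasurableSpace Z]
    (Ptrain : Measure Z) [IsProbabilityMeasure Ptrain]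
    (ℓ : Z → ℝ) (hcont : Continuous ℓ) (hnonneg : ∀ z, 0 ≤ ℓ z)
    (ε : ℝ) (hε : 0 < ε) (hε1 : ε < 1)
    (ls : ℝ) (hls : Ptrain {z | ls < ℓ z} = ENNReal.ofReal ε)
    (hatomless : Ptrain {z | ℓ z = ls} = 0)
    (Pstar : Measure Z)
    (hPstar : Pstar = (ENNReal.ofReal (1 - ε))⁻¹ • Ptrain.restrict {z | ℓ z ≤ ls}) :
    IsProbabilityMeasure Pstar ∧
    (∀ l₀ : ℝ, (Pstar {z | ℓ z ≤ l₀}).toReal =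
      min 1 ((Ptrain {z | ℓ z ≤ l₀}).toReal / (1 - ε))) ∧
    (∀ (P' Pt' : Measure Z), IsProbabilityMeasure P' → IsProbabilityMeasure Pt' →
      Ptrain = ENNReal.ofReal (1 - ε) • P' + ENNReal.ofReal ε • Pt' →
      ∀ l₀ : ℝ, P' {z | ℓ z ≤ l₀} ≤ Pstar {z | ℓ z ≤ l₀}) := by
  have hε1' : (0:ℝ) < 1 - ε := by linarith
  have hne : ENNReal.ofReal (1 - ε) ≠ 0 := by
    simp only [ne_eq, ENNReal.ofReal_eq_zero, not_le]; linarith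
  have hnetop : ENNReal.ofReal (1 - ε) ≠ ⊤ := ENNReal.ofReal_ne_top
  have hmeas : ∀ c : ℝ, MeasurableSet {z | ℓ z ≤ c} := fun c =>
    (isClosed_le hcont continuous_const).measurableSet
  -- Ptrain {ℓ ≤ ls} = ofReal (1 - ε)
  have h1 : Ptrain {z | ℓ z ≤ ls} = ENNReal.ofReal (1 - ε) := by
    have hopen : MeasurableSet {z | ls < ℓ z} :=
      (isOpen_lt continuous_const hcont).measurableSet
    have hc : {z | ls < ℓ z}ᶜ = {z | ℓ z ≤ ls} := by ext z; simp [not_lt]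
    have := measure_compl hopen (measure_ne_top Ptrain _)
    rw [hc, hls, measure_univ] at this
    have h2 : (1 : ENNReal) - ENNReal.ofReal ε = ENNReal.ofReal (1 - ε) := by
      rw [← ENNReal.ofReal_one, ← ENNReal.ofReal_sub _ hε.le]
    rw [this, h2]
  -- Pstar of a sublevel set
  have hPs : ∀ l₀ : ℝ, Pstar {z | ℓ z ≤ l₀} =
      (ENNReal.ofReal (1 - ε))⁻¹ * Ptrain ({z | ℓ z ≤ l₀} ∩ {z | ℓ z ≤ ls}) := by
    intro l₀
    rw [hPstar, Measure.smul_apply, Measure.restrict_apply (hmeas l₀)]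
    rfl
  have hPsuniv : Pstar Set.univ = 1 := by
    rw [hPstar, Measure.smul_apply, Measure.restrict_apply MeasurableSet.univ,
      Set.univ_inter, h1, smul_eq_mul, ENNReal.inv_mul_cancel hne hnetop]
  refine ⟨⟨hPsuniv⟩, ?_, ?_⟩
  · intro l₀
    rcases le_total l₀ ls with h | h
    · have hsub : {z | ℓ z ≤ l₀} ∩ {z | ℓ z ≤ ls} = {z | ℓ z ≤ l₀} := by
        ext z; simp only [Set.mem_inter_iff, Set.mem_setOf_eq, and_iff_left_iff_imp]
        exact fun hz => le_trans hz h
      have hle : Ptrain {z | ℓ z ≤ l₀} ≤ ENNReal.ofReal (1 - ε) := by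
        rw [← h1]; exact measure_mono (fun z hz => le_trans hz h)
      have hlt : (Ptrain {z | ℓ z ≤ l₀}).toReal ≤ 1 - ε := by
        have := ENNReal.toReal_mono hnetop hle
        rwa [ENNReal.toReal_ofReal hε1'.le] at this
      rw [hPs, hsub, ENNReal.toReal_mul, ENNReal.toReal_inv,
        ENNReal.toReal_ofReal hε1'.le, min_eq_right]
      · ring
      · rw [div_le_one hε1']; exact hlt
    · have hsub : {z | ℓ z ≤ l₀} ∩ {z | ℓ z ≤ ls} = {z | ℓ z ≤ ls} := by
        ext z; simp only [Set.mem_inter_iff, Set.mem_setOf_eq, and_iff_right_iff_imp]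
        exact fun hz => le_trans hz h
      have hge : ENNReal.ofReal (1 - ε) ≤ Ptrain {z | ℓ z ≤ l₀} := by
        rw [← h1]; exact measure_mono (fun z hz => le_trans hz h)
      have hge' : 1 - ε ≤ (Ptrain {z | ℓ z ≤ l₀}).toReal := by
        have := ENNReal.toReal_mono (measure_ne_top _ _) hge
        rwa [ENNReal.toReal_ofReal hε1'.le] at this
      rw [hPs, hsub, h1, ENNReal.toReal_mul, ENNReal.toReal_inv,
        ENNReal.toReal_ofReal hε1'.le, min_eq_left]
      · field_simp
      · rw [le_div_iff₀ hε1', one_mul]; exact hge'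
  · intro P' Pt' hP' hPt' hdec l₀
    rcases le_total l₀ ls with h | h
    · have hsub : {z | ℓ z ≤ l₀} ∩ {z | ℓ z ≤ ls} = {z | ℓ z ≤ l₀} := by
        ext z; simp only [Set.mem_inter_iff, Set.mem_setOf_eq, and_iff_left_iff_imp]
        exact fun hz => le_trans hz h
      rw [hPs, hsub]
      have hkey : ENNReal.ofReal (1 - ε) * P' {z | ℓ z ≤ l₀} ≤
          Ptrain {z | ℓ z ≤ l₀} := by
        rw [hdec]
        simp only [Measure.add_apply, Measure.smul_apply, smul_eq_mul]
        exact le_add_of_nonneg_right zero_le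
      calc P' {z | ℓ z ≤ l₀}
          = (ENNReal.ofReal (1 - ε))⁻¹ *
            (ENNReal.ofReal (1 - ε) * P' {z | ℓ z ≤ l₀}) := by
            rw [← mul_assoc, ENNReal.inv_mul_cancel hne hnetop, one_mul]
        _ ≤ _ := mul_le_mul_right hkey _
    · have hsub : {z | ℓ z ≤ l₀} ∩ {z | ℓ z ≤ ls} = {z | ℓ z ≤ ls} := by
        ext z; simp only [Set.mem_inter_iff, Set.mem_setOf_eq, and_iff_right_iff_imp]
        exact fun hz => le_trans hz h
      rw [hPs, hsub, h1, ENNReal.inv_mul_cancel hne hnetop]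
      exact prob_le_one
end
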